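/- arXiv:1912.02175 — 8 statements merged into one kernel-verified Lean document; each statement's English description precedes it below -/
import Mathlib

section
/- Let λ > 0. For each pair (y₀, y₁) ∈ Y × Y let S(y₀, y₁) = {w ∈ ℝ^N : y₀ is a solver output at w and y₁ is a λ-perturbed output at w}. Then: (i) each set S(y₀, y₁) is closed; (ii) the finitely many sets S(y₀, y₁), (y₀, y₁) ∈ Y × Y, cover ℝ^N; and (iii) on S(y₀, y₁) the interpolation f_λ coincides with the affine map w ↦ f(y₁) − (1/λ)·⟪w, y₀ − y₁⟫. In particular f_λ is piecewise affine. (Piecewise-affine part of Property A1 of Theorem 1.) -/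
open scoped InnerProductSpace

/-- **Piecewise-affine part of Property A1 of Theorem 1.** For each pair
`(y₀, y₁) ∈ Y × Y`, the set `S(y₀, y₁)` of weights at which `y₀` is a solver
output and `y₁` is a `λ`-perturbed output is closed; these finitely many sets
cover `ℝ^N`; and on `S(y₀, y₁)` the interpolation `f_λ` coincides with the
affine map `w ↦ f(y₁) − (1/λ)⟪w, y₀ − y₁⟫`. -/
theorem flam_piecewise_affine {N : ℕ} (hN : 0 < N)
    (Y : Finset (EuclideanSpace ℝ (Fin N))) (hY : Y.Nonempty)
    (f : EuclideanSpace ℝ (Fin N) →ᵃ[ℝ] ℝ)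
    (lam : ℝ) (hlam : 0 < lam)
    (S : EuclideanSpace ℝ (Fin N) → EuclideanSpace ℝ (Fin N) →
      Set (EuclideanSpace ℝ (Fin N)))
    (hS : ∀ y₀ y₁, S y₀ y₁ = {w | (∀ y ∈ Y, ⟪w, y₀⟫_ℝ ≤ ⟪w, y⟫_ℝ) ∧
      (∀ y ∈ Y, ⟪w, y₁⟫_ℝ + lam * f y₁ ≤ ⟪w, y⟫_ℝ + lam * f y)})
    (flam : EuclideanSpace ℝ (Fin N) → ℝ)
    (hflam : ∀ w, flam w = (1 / lam) * (Y.inf' hY (fun y => ⟪w, y⟫_ℝ + lam * f y) -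
      Y.inf' hY (fun y => ⟪w, y⟫_ℝ))) :
    (∀ y₀ ∈ Y, ∀ y₁ ∈ Y, IsClosed (S y₀ y₁)) ∧
    (∀ w : EuclideanSpace ℝ (Fin N), ∃ y₀ ∈ Y, ∃ y₁ ∈ Y, w ∈ S y₀ y₁) ∧
    (∀ y₀ ∈ Y, ∀ y₁ ∈ Y, ∀ w ∈ S y₀ y₁,
      flam w = f y₁ - (1 / lam) * ⟪w, y₀ - y₁⟫_ℝ) := by

  refine ⟨?_, ?_, ?_⟩
  · intro y₀ _ y₁ _
    rw [hS]
    have : {w : EuclideanSpace ℝ (Fin N) | (∀ y ∈ Y, ⟪w, y₀⟫_ℝ ≤ ⟪w, y⟫_ℝ) ∧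
        (∀ y ∈ Y, ⟪w, y₁⟫_ℝ + lam * f y₁ ≤ ⟪w, y⟫_ℝ + lam * f y)} =
        (⋂ y ∈ Y, {w | ⟪w, y₀⟫_ℝ ≤ ⟪w, y⟫_ℝ}) ∩
        (⋂ y ∈ Y, {w | ⟪w, y₁⟫_ℝ + lam * f y₁ ≤ ⟪w, y⟫_ℝ + lam * f y}) := by
      ext w; simp [Set.mem_iInter]
    rw [this]
    have hcont : ∀ y : EuclideanSpace ℝ (Fin N), Continuous fun w : EuclideanSpace ℝ (Fin N) => ⟪w, y⟫_ℝ :=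
      fun y => continuous_id.inner continuous_const
    refine IsClosed.inter ?_ ?_
    · exact isClosed_biInter fun y _ => isClosed_le (hcont _) (hcont _)
    · exact isClosed_biInter fun y _ =>
        isClosed_le ((hcont _).add continuous_const) ((hcont _).add continuous_const)
  · intro w
    obtain ⟨y₀, hy₀, h0⟩ := Y.exists_min_image (fun y => ⟪w, y⟫_ℝ) hY
    obtain ⟨y₁, hy₁, h1⟩ := Y.exists_min_image (fun y => ⟪w, y⟫_ℝ + lam * f y) hY
    exact ⟨y₀, hy₀, y₁, hy₁, by rw [hS]; exact ⟨h0, h1⟩⟩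
  · intro y₀ hy₀ y₁ hy₁ w hw
    rw [hS] at hw
    obtain ⟨h0, h1⟩ := hw
    have e0 : Y.inf' hY (fun y => ⟪w, y⟫_ℝ) = ⟪w, y₀⟫_ℝ :=
      le_antisymm (Finset.inf'_le _ hy₀) (Finset.le_inf' _ _ h0)
    have e1 : Y.inf' hY (fun y => ⟪w, y⟫_ℝ + lam * f y) = ⟪w, y₁⟫_ℝ + lam * f y₁ :=
      le_antisymm (Finset.inf'_le _ hy₁) (Finset.le_inf' _ _ h1)
    rw [hflam, e0, e1, inner_sub_right]
    field_simp
    ring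
end

section
/- Let w ∈ ℝ^N and suppose y₀ ∈ Y is the unique solver output at w, i.e. ⟪w, y₀⟫ < ⟪w, y⟫ for all y ∈ Y with y ≠ y₀. Assume Y has at least two elements and set c = min_{y ∈ Y, y ≠ y₀} (⟪w, y⟫ − ⟪w, y₀⟫) > 0 and d = max_{y ∈ Y} (f(y₀) − f(y)). Then for every λ > 0 with λ·d < c, the point y₀ is a λ-perturbed output at w. (Quantitative version of the vanishing part of Property A2 of Theorem 1.) -/
open scoped InnerProductSpace
open Classical in

/-- **Quantitative vanishing part of Property A2 of Theorem 1.** Suppose `y₀` is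
the unique solver output at `w`, and set `c = min_{y ∈ Y, y ≠ y₀}(⟪w, y⟫ − ⟪w, y₀⟫)`
and `d = max_{y ∈ Y}(f(y₀) − f(y))`. Then `c > 0` and for every `λ > 0` with
`λ·d < c`, the point `y₀` is a `λ`-perturbed output at `w`. -/
theorem vanishing_quantitative {N : ℕ} (hN : 0 < N)
    (Y : Finset (EuclideanSpace ℝ (Fin N))) (hY : Y.Nonempty)
    (f : EuclideanSpace ℝ (Fin N) →ᵃ[ℝ] ℝ)
    (w : EuclideanSpace ℝ (Fin N))
    (y₀ : EuclideanSpace ℝ (Fin N)) (hy₀Y : y₀ ∈ Y)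
    (hcard : 1 < Y.card)
    (hne : (Y.erase y₀).Nonempty)
    (huniq : ∀ y ∈ Y, y ≠ y₀ → ⟪w, y₀⟫_ℝ < ⟪w, y⟫_ℝ)
    (c d : ℝ)
    (hc : c = (Y.erase y₀).inf' hne (fun y => ⟪w, y⟫_ℝ - ⟪w, y₀⟫_ℝ))
    (hd : d = Y.sup' hY (fun y => f y₀ - f y)) :
    0 < c ∧ ∀ lam : ℝ, 0 < lam → lam * d < c →
      ∀ y ∈ Y, ⟪w, y₀⟫_ℝ + lam * f y₀ ≤ ⟪w, y⟫_ℝ + lam * f y := by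
  have hcpos : 0 < c := by
    rw [hc, Finset.lt_inf'_iff]
    intro y hy
    rw [Finset.mem_erase] at hy
    have := huniq y hy.2 hy.1
    linarith
  refine ⟨hcpos, fun lam hlam hld y hy => ?_⟩
  by_cases hyy : y = y₀
  · subst hyy; exact le_refl _
  · have h1 : c ≤ ⟪w, y⟫_ℝ - ⟪w, y₀⟫_ℝ := by
      rw [hc]
      exact Finset.inf'_le _ (Finset.mem_erase.mpr ⟨hyy, hy⟩)
    have h2 : f y₀ - f y ≤ d := by
      rw [hd]
      exact Finset.le_sup' (fun y => f y₀ - f y) hy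
    have h3 : lam * (f y₀ - f y) ≤ lam * d := by
      exact mul_le_mul_of_nonneg_left h2 hlam.le
    nlinarith
end

section
/- Let λ > 0 and w ∈ ℝ^N. If y₀ is a solver output at w and y₁ is a λ-perturbed output at w, then f(y₁) ≤ f_λ(w) ≤ f(y₀). (Observation 3 of the paper: the interpolation f_λ is sandwiched between f evaluated at the perturbed output and f evaluated at the solver output.) -/
open scoped InnerProductSpace

/-- **Observation 3 (sandwich).** If `y₀` is a solver output at `w` and `y₁` is
a `λ`-perturbed output at `w`, then `f(y₁) ≤ f_λ(w) ≤ f(y₀)`. -/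
theorem flam_sandwich {N : ℕ} (hN : 0 < N)
    (Y : Finset (EuclideanSpace ℝ (Fin N))) (hY : Y.Nonempty)
    (f : EuclideanSpace ℝ (Fin N) →ᵃ[ℝ] ℝ)
    (lam : ℝ) (hlam : 0 < lam)
    (w : EuclideanSpace ℝ (Fin N))
    (y₀ : EuclideanSpace ℝ (Fin N)) (hy₀Y : y₀ ∈ Y)
    (hy₀ : ∀ y ∈ Y, ⟪w, y₀⟫_ℝ ≤ ⟪w, y⟫_ℝ)
    (y₁ : EuclideanSpace ℝ (Fin N)) (hy₁Y : y₁ ∈ Y)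
    (hy₁ : ∀ y ∈ Y, ⟪w, y₁⟫_ℝ + lam * f y₁ ≤ ⟪w, y⟫_ℝ + lam * f y)
    (flam : EuclideanSpace ℝ (Fin N) → ℝ)
    (hflam : ∀ w', flam w' = (1 / lam) *
      (Y.inf' hY (fun y => ⟪w', y⟫_ℝ + lam * f y) - Y.inf' hY (fun y => ⟪w', y⟫_ℝ))) :
    f y₁ ≤ flam w ∧ flam w ≤ f y₀ := by
  have h1 : Y.inf' hY (fun y => ⟪w, y⟫_ℝ + lam * f y) = ⟪w, y₁⟫_ℝ + lam * f y₁ :=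
    le_antisymm (Finset.inf'_le _ hy₁Y) (Finset.le_inf' _ _ hy₁)
  have h2 : Y.inf' hY (fun y => ⟪w, y⟫_ℝ) = ⟪w, y₀⟫_ℝ :=
    le_antisymm (Finset.inf'_le _ hy₀Y) (Finset.le_inf' _ _ hy₀)
  rw [hflam, h1, h2]
  constructor
  · have := hy₀ y₁ hy₁Y
    rw [div_mul_eq_mul_div, le_div_iff₀ hlam]
    nlinarith
  · have := hy₁ y₀ hy₀Y
    rw [div_mul_eq_mul_div, div_le_iff₀ hlam]
    nlinarith
end

section
/- Let λ > 0, w ∈ ℝ^N, and let y₀ be a solver output at w and y₁ a λ-perturbed output at w. Then λ·(f(y₁) − f(y₀)) ≤ ⟪w, y₀ − y₁⟫ ≤ 0; in particular f(y₁) ≤ f(y₀). (The region where the solver output is y₀ and the perturbed output is y₁ lies in the strip between the hyperplanes {⟪w, y₀ − y₁⟫ = 0} and {⟪w, y₀ − y₁⟫ = λ·(f(y₁) − f(y₀))}.) -/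
open scoped InnerProductSpace

/-- If `y₀` is a solver output at `w` and `y₁` is a `λ`-perturbed output at `w`,
then `λ (f(y₁) − f(y₀)) ≤ ⟪w, y₀ − y₁⟫ ≤ 0`; in particular `f(y₁) ≤ f(y₀)`. -/
theorem strip_bounds {N : ℕ} (hN : 0 < N)
    (Y : Finset (EuclideanSpace ℝ (Fin N))) (hY : Y.Nonempty)
    (f : EuclideanSpace ℝ (Fin N) →ᵃ[ℝ] ℝ)
    (lam : ℝ) (hlam : 0 < lam)
    (w : EuclideanSpace ℝ (Fin N))
    (y₀ : EuclideanSpace ℝ (Fin N)) (hy₀Y : y₀ ∈ Y)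
    (hy₀ : ∀ y ∈ Y, ⟪w, y₀⟫_ℝ ≤ ⟪w, y⟫_ℝ)
    (y₁ : EuclideanSpace ℝ (Fin N)) (hy₁Y : y₁ ∈ Y)
    (hy₁ : ∀ y ∈ Y, ⟪w, y₁⟫_ℝ + lam * f y₁ ≤ ⟪w, y⟫_ℝ + lam * f y) :
    lam * (f y₁ - f y₀) ≤ ⟪w, y₀ - y₁⟫_ℝ ∧ ⟪w, y₀ - y₁⟫_ℝ ≤ 0 ∧ f y₁ ≤ f y₀ := by
  have h1 := hy₀ y₁ hy₁Y
  have h2 := hy₁ y₀ hy₀Y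
  rw [inner_sub_right]
  refine ⟨by linarith, by linarith, ?_⟩
  nlinarith
end

section
/- Let λ > 0, w ∈ ℝ^N, and let y₀ be a solver output at w. Then f_λ(w) = f(y₀) if and only if y₀ is a λ-perturbed output at w. (Characterization of the set W_eq^λ on which the interpolation f_λ agrees with f composed with the solver.) -/
open scoped InnerProductSpace

/-- **Characterization of `W_eq^λ`.** If `y₀` is a solver output at `w`, then
`f_λ(w) = f(y₀)` if and only if `y₀` is a `λ`-perturbed output at `w`. -/
theorem flam_eq_iff_perturbed {N : ℕ} (hN : 0 < N)
    (Y : Finset (EuclideanSpace ℝ (Fin N))) (hY : Y.Nonempty)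
    (f : EuclideanSpace ℝ (Fin N) →ᵃ[ℝ] ℝ)
    (lam : ℝ) (hlam : 0 < lam)
    (w : EuclideanSpace ℝ (Fin N))
    (y₀ : EuclideanSpace ℝ (Fin N)) (hy₀Y : y₀ ∈ Y)
    (hy₀ : ∀ y ∈ Y, ⟪w, y₀⟫_ℝ ≤ ⟪w, y⟫_ℝ)
    (flam : EuclideanSpace ℝ (Fin N) → ℝ)
    (hflam : ∀ w', flam w' = (1 / lam) *
      (Y.inf' hY (fun y => ⟪w', y⟫_ℝ + lam * f y) - Y.inf' hY (fun y => ⟪w', y⟫_ℝ))) :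
    flam w = f y₀ ↔
      (∀ y ∈ Y, ⟪w, y₀⟫_ℝ + lam * f y₀ ≤ ⟪w, y⟫_ℝ + lam * f y) := by
  have hB : Y.inf' hY (fun y => ⟪w, y⟫_ℝ) = ⟪w, y₀⟫_ℝ :=
    le_antisymm (Finset.inf'_le _ hy₀Y) (Finset.le_inf' _ _ hy₀)
  rw [hflam, hB]
  constructor
  · intro h y hy
    have hA : Y.inf' hY (fun y => ⟪w, y⟫_ℝ + lam * f y) = ⟪w, y₀⟫_ℝ + lam * f y₀ := by
      rw [div_mul_eq_mul_div, one_mul, div_eq_iff hlam.ne'] at h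
      linarith
    calc ⟪w, y₀⟫_ℝ + lam * f y₀ = Y.inf' hY (fun y => ⟪w, y⟫_ℝ + lam * f y) := hA.symm
      _ ≤ ⟪w, y⟫_ℝ + lam * f y := Finset.inf'_le _ hy
  · intro h
    have hA : Y.inf' hY (fun y => ⟪w, y⟫_ℝ + lam * f y) = ⟪w, y₀⟫_ℝ + lam * f y₀ :=
      le_antisymm (Finset.inf'_le _ hy₀Y) (Finset.le_inf' _ _ h)
    rw [hA, add_sub_cancel_left, div_mul_eq_mul_div, one_mul, mul_div_cancel_left₀ _ hlam.ne']
end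

section
/- Fix y₁ ∈ Y and define the polyhedral cone P = {w ∈ ℝ^N : ⟪w, y₁ − z⟫ ≤ 0 for all z ∈ Y} (which is nonempty since 0 ∈ P). Then there exists a constant C ≥ 0 such that for every λ > 0 and every w ∈ ℝ^N satisfying ⟪w, y₁ − z⟫ ≤ λ·|f(z) − f(y₁)| for all z ∈ Y, the Euclidean distance from w to P is at most C·λ. (Displacement bound from the proof of Property A3 of Theorem 1: each point of the relaxed polytope P₁^λ is at most Cλ away from P₁.) -/
open scoped InnerProductSpace Pointwise

section Caratheodory
variable {E : Type*} [AddCommGroup E] [Module ℝ E]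

/-- Conic Carathéodory: any nonnegative combination over `A` can be rewritten as a
nonnegative combination over a linearly independent subset. -/
lemma cone_caratheodory_aux (n : ℕ) : ∀ (A : Finset E), A.card ≤ n →
    ∀ (μ : E → ℝ), (∀ a ∈ A, 0 ≤ μ a) →
    ∃ S : Finset E, S ⊆ A ∧ LinearIndependent ℝ ((↑) : {a // a ∈ S} → E) ∧
      ∃ ν : E → ℝ, (∀ a ∈ S, 0 ≤ ν a) ∧ ∑ a ∈ A, μ a • a = ∑ a ∈ S, ν a • a := by
  classical
  induction n with
  | zero =>
    intro A hA μ hμ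
    rw [Finset.card_eq_zero.mp (Nat.le_zero.mp hA)]
    exact ⟨∅, Finset.Subset.refl _, linearIndependent_empty_type, μ, by simp, rfl⟩
  | succ n ih =>
    intro A hA μ hμ
    set A' : Finset E := A.filter (fun a => μ a ≠ 0) with hA'
    have hA'sub : A' ⊆ A := Finset.filter_subset _ _
    have hsum' : ∑ a ∈ A, μ a • a = ∑ a ∈ A', μ a • a :=
      (Finset.sum_filter_of_ne (by intro a _ h hc; apply h; rw [hc, zero_smul])).symm
    by_cases hind : LinearIndependent ℝ ((↑) : {a // a ∈ A'} → E)
    · exact ⟨A', hA'sub, hind, μ, fun a ha => hμ a (hA'sub ha), hsum'⟩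
    -- extract a nontrivial relation with a positive coefficient
    obtain ⟨c, hcsum, a₁, ha₁A, ha₁pos⟩ :
        ∃ c : E → ℝ, ∑ a ∈ A', c a • a = 0 ∧ ∃ a ∈ A', 0 < c a := by
      obtain ⟨g, hgsum, i₀, hi₀⟩ := Fintype.not_linearIndependent_iff.mp hind
      set c : E → ℝ := fun a => if h : a ∈ A' then g ⟨a, h⟩ else 0 with hc
      have hsum : ∑ a ∈ A', c a • a = 0 := by
        rw [← Finset.sum_attach A' (fun a => c a • a)]
        simpa [hc] using hgsum
      rcases lt_or_gt_of_ne hi₀ with hneg | hpos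
      · refine ⟨-c, by simpa using congrArg Neg.neg hsum, i₀, i₀.2, ?_⟩
        simp only [Pi.neg_apply, hc, dif_pos i₀.2, neg_pos]
        simpa [hc, dif_pos i₀.2] using hneg
      · exact ⟨c, hsum, i₀, i₀.2, by simpa [hc, dif_pos i₀.2] using hpos⟩
    set T : Finset E := A'.filter (fun a => 0 < c a) with hT
    have hTne : T.Nonempty := ⟨a₁, Finset.mem_filter.mpr ⟨ha₁A, ha₁pos⟩⟩
    set t : ℝ := T.inf' hTne (fun a => μ a / c a) with ht
    have ht0 : 0 ≤ t := by
      refine Finset.le_inf' hTne _ (fun a ha => ?_)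
      have ha' := Finset.mem_filter.mp ha
      exact div_nonneg (hμ a (hA'sub ha'.1)) ha'.2.le
    obtain ⟨a₀, ha₀T, ha₀eq⟩ := Finset.exists_mem_eq_inf' hTne (fun a => μ a / c a)
    have ha₀A' : a₀ ∈ A' := (Finset.mem_filter.mp ha₀T).1
    have hca₀ : 0 < c a₀ := (Finset.mem_filter.mp ha₀T).2
    set ν : E → ℝ := fun a => μ a - t * c a with hν
    have hν0 : ∀ a ∈ A', 0 ≤ ν a := by
      intro a ha
      by_cases hca : 0 < c a
      · have haT : a ∈ T := Finset.mem_filter.mpr ⟨ha, hca⟩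
        have := Finset.inf'_le (fun a => μ a / c a) haT
        have := (le_div_iff₀ hca).mp (ht ▸ this)
        simpa [hν] using by linarith
      · have : t * c a ≤ 0 := mul_nonpos_iff.mpr (Or.inl ⟨ht0, not_lt.mp hca⟩)
        have := hμ a (hA'sub ha)
        simp only [hν]; linarith
    have hνa₀ : ν a₀ = 0 := by
      have htt : t = μ a₀ / c a₀ := ha₀eq
      simp only [hν, htt]
      field_simp; ring
    have hsumν : ∑ a ∈ A', ν a • a = ∑ a ∈ A, μ a • a := by
      simp only [hν, sub_smul, Finset.sum_sub_distrib, hsum']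
      have : ∑ a ∈ A', (t * c a) • a = t • ∑ a ∈ A', c a • a := by
        rw [Finset.smul_sum]; simp [smul_smul]
      rw [this, hcsum, smul_zero, sub_zero]
    have hsumν' : ∑ a ∈ A'.erase a₀, ν a • a = ∑ a ∈ A, μ a • a := by
      rw [← hsumν]
      exact Finset.sum_erase _ (by rw [hνa₀, zero_smul])
    have hcard : (A'.erase a₀).card ≤ n := by
      have h1 : A'.card ≤ n + 1 := le_trans (Finset.card_le_card hA'sub) hA
      have h2 := Finset.card_erase_of_mem ha₀A'
      have h3 : 0 < A'.card := Finset.card_pos.mpr ⟨a₀, ha₀A'⟩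
      omega
    obtain ⟨S, hSsub, hSind, ρ, hρ0, hρsum⟩ := ih (A'.erase a₀) hcard ν
      (fun a ha => hν0 a (Finset.mem_of_mem_erase ha))
    exact ⟨S, fun a ha => hA'sub (Finset.mem_of_mem_erase (hSsub ha)), hSind, ρ, hρ0,
      by rw [← hρsum, hsumν']⟩

end Caratheodory

section NormBound
variable {E : Type*} [NormedAddCommGroup E] [NormedSpace ℝ E] [FiniteDimensional ℝ E]

set_option maxHeartbeats 1000000 in
set_option synthInstance.maxHeartbeats 200000 in
/-- If the elements of `S` are linearly independent, the ℓ¹ norm of coefficients is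
controlled by the norm of the combination. -/
lemma indep_sum_bound (S : Finset E) (hS : LinearIndependent ℝ ((↑) : {a // a ∈ S} → E)) :
    ∃ c : ℝ, 0 ≤ c ∧ ∀ ν : E → ℝ, (∑ a ∈ S, |ν a|) ≤ c * ‖∑ a ∈ S, ν a • a‖ := by
  classical
  set g : ({a // a ∈ S} → ℝ) →ₗ[ℝ] E := Fintype.linearCombination ℝ ((↑) : {a // a ∈ S} → E)
    with hg
  have hgapp : ∀ μ : {a // a ∈ S} → ℝ, g μ = ∑ i, μ i • (i : E) := fun μ => rfl
  have hker : LinearMap.ker g = ⊥ := by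
    rw [LinearMap.ker_eq_bot']
    intro m hm
    exact funext (Fintype.linearIndependent_iff.mp hS m (by rw [← hgapp]; exact hm))
  have hinj : Function.Injective g := LinearMap.ker_eq_bot.mp hker
  obtain ⟨c0, hc00, hc0b⟩ : ∃ c0 : ℝ, 0 ≤ c0 ∧ ∀ μ : {a // a ∈ S} → ℝ, ‖μ‖ ≤ c0 * ‖g μ‖ := by
    set e : ({a // a ∈ S} → ℝ) ≃ₗ[ℝ] LinearMap.range g := LinearEquiv.ofInjective g hinj with he
    set L : (LinearMap.range g) →L[ℝ] ({a // a ∈ S} → ℝ) :=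
      LinearMap.toContinuousLinearMap (e.symm : (LinearMap.range g) →ₗ[ℝ] _) with hL
    refine ⟨‖L‖, ContinuousLinearMap.opNorm_nonneg L, fun μ => ?_⟩
    have h1 : μ = L (e μ) := by simp [hL, he]
    have h2 : ‖L (e μ)‖ ≤ ‖L‖ * ‖(e μ : E)‖ := L.le_opNorm _
    have h3 : ((e μ : LinearMap.range g) : E) = g μ := rfl
    rw [← h1, h3] at h2
    exact h2
  refine ⟨(S.card : ℝ) * c0, by positivity, fun ν => ?_⟩
  have hgμ : g (fun i => ν i) = ∑ a ∈ S, ν a • a := by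
    rw [hgapp, ← Finset.sum_attach S (fun a => ν a • a)]
    rfl
  have hcard0 : (0:ℝ) ≤ (S.card : ℝ) := by positivity
  calc ∑ a ∈ S, |ν a| = ∑ i : {a // a ∈ S}, |ν i| := by
        rw [← Finset.sum_attach S (fun a => |ν a|)]; rfl
    _ ≤ ∑ _i : {a // a ∈ S}, ‖(fun i : {a // a ∈ S} => ν i)‖ := by
        refine Finset.sum_le_sum (fun i _ => ?_)
        simpa using norm_le_pi_norm (fun i : {a // a ∈ S} => ν i) i
    _ = (S.card : ℝ) * ‖(fun i : {a // a ∈ S} => ν i)‖ := by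
        simp [Finset.card_univ, mul_comm]
    _ ≤ (S.card : ℝ) * (c0 * ‖g (fun i => ν i)‖) :=
        mul_le_mul_of_nonneg_left (hc0b _) hcard0
    _ = (S.card : ℝ) * c0 * ‖∑ a ∈ S, ν a • a‖ := by rw [hgμ]; ring

set_option maxHeartbeats 1000000 in
set_option synthInstance.maxHeartbeats 200000 in
lemma closed_cone_piece (S : Finset E) (hS : LinearIndependent ℝ ((↑) : {a // a ∈ S} → E)) :
    IsClosed {x : E | ∃ ν : E → ℝ, (∀ a ∈ S, 0 ≤ ν a) ∧ x = ∑ a ∈ S, ν a • a} := by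
  classical
  set g : ({a // a ∈ S} → ℝ) →ₗ[ℝ] E := Fintype.linearCombination ℝ ((↑) : {a // a ∈ S} → E)
    with hg
  have hgapp : ∀ μ : {a // a ∈ S} → ℝ, g μ = ∑ i, μ i • (i : E) := fun μ => rfl
  have hker : LinearMap.ker g = ⊥ := by
    rw [LinearMap.ker_eq_bot']
    intro m hm
    exact funext (Fintype.linearIndependent_iff.mp hS m (by rw [← hgapp]; exact hm))
  have hCE := LinearMap.isClosedEmbedding_of_injective hker
  have hset : {x : E | ∃ ν : E → ℝ, (∀ a ∈ S, 0 ≤ ν a) ∧ x = ∑ a ∈ S, ν a • a}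
      = g '' {μ : {a // a ∈ S} → ℝ | ∀ i, 0 ≤ μ i} := by
    ext x
    constructor
    · rintro ⟨ν, hν, rfl⟩
      refine ⟨fun i => ν i, fun i => hν i i.2, ?_⟩
      rw [hgapp, ← Finset.sum_attach S (fun a => ν a • a)]
      rfl
    · rintro ⟨μ, hμ, rfl⟩
      refine ⟨fun a => if h : a ∈ S then μ ⟨a, h⟩ else 0,
        fun a ha => by simp only []; rw [dif_pos ha]; exact hμ _, ?_⟩
      rw [hgapp, ← Finset.sum_attach S
        (fun a => (if h : a ∈ S then μ ⟨a, h⟩ else 0) • a)]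
      exact Finset.sum_congr rfl (fun i _ => by rw [dif_pos i.2])
  rw [hset]
  refine hCE.isClosedMap _ ?_
  have : {μ : {a // a ∈ S} → ℝ | ∀ i, 0 ≤ μ i} = ⋂ i, {μ | 0 ≤ μ i} := by
    ext; simp [Set.mem_iInter]
  rw [this]
  exact isClosed_iInter (fun i => isClosed_le continuous_const (continuous_apply i))

end NormBound

section Hoffman
variable {E : Type*} [NormedAddCommGroup E] [InnerProductSpace ℝ E] [FiniteDimensional ℝ E]

set_option maxHeartbeats 1000000 in
/-- Hoffman-type bound for a cone: points almost satisfying the homogeneous constraints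
are at bounded distance from the cone of solutions. -/
lemma hoffman_cone (B : Finset E) (β : E → ℝ) (hβ : ∀ a, 0 ≤ β a) :
    ∃ C : ℝ, 0 ≤ C ∧ ∀ v : E, (∀ a ∈ B, -β a ≤ ⟪a, v⟫_ℝ) →
      Metric.infDist v {w : E | ∀ a ∈ B, 0 ≤ ⟪a, w⟫_ℝ} ≤ C := by
  classical
  haveI : CompleteSpace E := FiniteDimensional.complete ℝ E
  set Pset : Set E := {w : E | ∀ a ∈ B, 0 ≤ ⟪a, w⟫_ℝ} with hPset
  have hPdual : Pset = (ProperCone.innerDual (B : Set E) : Set E) := by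
    ext w
    simp [hPset, ProperCone.mem_innerDual]
  have hPconv : Convex ℝ Pset := hPdual ▸ (ProperCone.innerDual (B : Set E)).convex
  have hPclosed : IsClosed Pset := hPdual ▸ (ProperCone.innerDual (B : Set E)).isClosed
  have h0P : (0:E) ∈ Pset := fun a _ => by simp
  -- the cone generated by B
  set Kc : Set E := {x : E | ∃ μ : E → ℝ, (∀ a, 0 ≤ μ a) ∧ x = ∑ a ∈ B, μ a • a} with hKc
  have hKne : (0:E) ∈ Kc := ⟨0, fun a => le_refl 0, by simp⟩
  set K : ConvexCone ℝ E :=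
    { carrier := Kc
      smul_mem' := by
        rintro c hc x ⟨μ, hμ, rfl⟩
        exact ⟨fun a => c * μ a, fun a => mul_nonneg hc.le (hμ a), by
          rw [Finset.smul_sum]
          exact Finset.sum_congr rfl fun a _ => by
            show c • μ a • a = (c * μ a) • a
            rw [smul_smul]⟩
      add_mem' := by
        rintro x ⟨μ, hμ, rfl⟩ y ⟨ν, hν, rfl⟩
        exact ⟨fun a => μ a + ν a, fun a => add_nonneg (hμ a) (hν a), by
          rw [← Finset.sum_add_distrib]
          exact Finset.sum_congr rfl fun a _ => by
            show μ a • a + ν a • a = (μ a + ν a) • a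
            rw [add_smul]⟩ } with hKdef
  have hKco : (K : Set E) = Kc := rfl
  -- closedness of Kc via conic Carathéodory
  have hKclosed : IsClosed Kc := by
    have hrep : Kc = ⋃ S ∈ B.powerset.filter
        (fun S => LinearIndependent ℝ ((↑) : {a // a ∈ S} → E)),
        {x : E | ∃ ν : E → ℝ, (∀ a ∈ S, 0 ≤ ν a) ∧ x = ∑ a ∈ S, ν a • a} := by
      ext x
      constructor
      · rintro ⟨μ, hμ, rfl⟩
        obtain ⟨S, hSB, hSind, ν, hν, hsum⟩ :=
          cone_caratheodory_aux B.card B le_rfl μ (fun a _ => hμ a)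
        exact Set.mem_biUnion
          (Finset.mem_filter.mpr ⟨Finset.mem_powerset.mpr hSB, hSind⟩) ⟨ν, hν, hsum⟩
      · intro hx
        rw [Set.mem_iUnion₂] at hx
        obtain ⟨S, hS, ν, hν, rfl⟩ := hx
        have hSB := Finset.mem_powerset.mp (Finset.mem_filter.mp hS).1
        refine ⟨fun a => if a ∈ S then ν a else 0, fun a => ?_, ?_⟩
        · show 0 ≤ if a ∈ S then ν a else 0
          split_ifs with h
          exacts [hν a h, le_rfl]
        · rw [← Finset.sum_subset hSB (fun a _ h => by
            show (if a ∈ S then ν a else 0) • a = 0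
            rw [if_neg h, zero_smul])]
          exact (Finset.sum_congr rfl fun a ha => by
            show (if a ∈ S then ν a else 0) • a = ν a • a
            rw [if_pos ha]).symm
    rw [hrep]
    exact isClosed_biUnion_finset
      (fun S hS => closed_cone_piece S (Finset.mem_filter.mp hS).2)
  -- dual of Kc is the dual of B
  have hdual : ProperCone.innerDual Kc = ProperCone.innerDual (B : Set E) := by
    ext w
    simp only [ProperCone.mem_innerDual]
    constructor
    · intro h a ha
      refine @h a ⟨fun b => if b = a then 1 else 0,
        fun b => by by_cases hb : b = a <;> simp [hb], ?_⟩
      simp only [ite_smul, one_smul, zero_smul]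
      rw [Finset.sum_ite_eq' B a (fun b => b), if_pos (Finset.mem_coe.mp ha)]
    · rintro h x ⟨μ, hμ, rfl⟩
      rw [sum_inner]
      refine Finset.sum_nonneg (fun a ha => ?_)
      rw [real_inner_smul_left]
      exact mul_nonneg (hμ a) (h ha)
  -- bipolar theorem
  obtain ⟨KP, hKPco⟩ : ∃ KP : ProperCone ℝ E, (KP : Set E) = Kc :=
    ⟨⟨K.toPointedCone hKne, hKclosed⟩, rfl⟩
  have hbip := ProperCone.innerDual_innerDual KP
  -- constants
  set cS : Finset E → ℝ := fun S =>
    if h : LinearIndependent ℝ ((↑) : {a // a ∈ S} → E)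
    then (indep_sum_bound S h).choose else 0 with hcSdef
  have hcS0 : ∀ S, 0 ≤ cS S := by
    intro S
    simp only [hcSdef]
    split_ifs with h
    exacts [(indep_sum_bound S h).choose_spec.1, le_rfl]
  set C0 : ℝ := (B.powerset).sup' (Finset.powerset_nonempty B) cS with hC0def
  have hC00 : 0 ≤ C0 :=
    le_trans (hcS0 ∅) (Finset.le_sup' cS (Finset.empty_mem_powerset B))
  set Bmax : ℝ := ∑ a ∈ B, β a with hBmaxdef
  have hBmaxb : ∀ a ∈ B, β a ≤ Bmax := fun a ha =>
    Finset.single_le_sum (fun b _ => hβ b) ha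
  have hBmax0 : 0 ≤ Bmax := Finset.sum_nonneg (fun b _ => hβ b)
  refine ⟨Bmax * C0, mul_nonneg hBmax0 hC00, fun v hv => ?_⟩
  -- project v onto Pset
  obtain ⟨w, hwP, hmin⟩ :=
    exists_norm_eq_iInf_of_complete_convex ⟨0, h0P⟩ hPclosed.isComplete hPconv v
  have hproj := (norm_eq_iInf_iff_real_inner_le_zero hPconv hwP).mp hmin
  have h2w : w + w ∈ Pset := by
    intro a ha
    have := hwP a ha
    rw [inner_add_right]
    linarith
  have hww : ⟪v - w, w⟫_ℝ = 0 := by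
    have h1 := hproj 0 h0P
    have h2 := hproj (w + w) h2w
    rw [zero_sub, inner_neg_right] at h1
    rw [add_sub_cancel_right] at h2
    linarith
  have hu : ∀ p ∈ Pset, ⟪v - w, p⟫_ℝ ≤ 0 := by
    intro p hp
    have := hproj p hp
    rw [inner_sub_right, hww, sub_zero] at this
    exact this
  -- Farkas: w - v is a nonnegative combination of B
  have hwv : w - v ∈ Kc := by
    have hmem : w - v ∈ ProperCone.innerDual (ProperCone.innerDual (KP : Set E) : Set E) := by
      rw [ProperCone.mem_innerDual]
      intro p hp
      rw [hKPco, hdual, ← hPdual] at hp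
      have h1 := hu p hp
      rw [← neg_sub v w, inner_neg_right, real_inner_comm]
      linarith
    rw [hbip] at hmem
    rw [← hKPco]; exact hmem
  obtain ⟨μ, hμ0, hμsum⟩ := hwv
  obtain ⟨S, hSB, hSind, ν, hν0, hνsum⟩ :=
    cone_caratheodory_aux B.card B le_rfl μ (fun a _ => hμ0 a)
  have hrep : w - v = ∑ a ∈ S, ν a • a := by rw [hμsum, hνsum]
  have hcSspec : ∀ ν' : E → ℝ, (∑ a ∈ S, |ν' a|) ≤ cS S * ‖∑ a ∈ S, ν' a • a‖ := by
    intro ν'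
    have : cS S = (indep_sum_bound S hSind).choose := by
      simp only [hcSdef]
      rw [dif_pos hSind]
    rw [this]
    exact (indep_sum_bound S hSind).choose_spec.2 ν'
  have hcSC0 : cS S ≤ C0 := Finset.le_sup' cS (Finset.mem_powerset.mpr hSB)
  -- the key norm estimate
  have hkey : ‖v - w‖ * ‖v - w‖ ≤ Bmax * C0 * ‖v - w‖ := by
    have e1 : ‖v - w‖ * ‖v - w‖ = ⟪v - w, v - w⟫_ℝ :=
      (real_inner_self_eq_norm_mul_norm (v - w)).symm
    have e2 : ⟪v - w, v - w⟫_ℝ = -⟪w - v, v⟫_ℝ := by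
      rw [inner_sub_right, hww, sub_zero, ← neg_sub v w, inner_neg_left, neg_neg]
    have e3 : ⟪w - v, v⟫_ℝ = ∑ a ∈ S, ν a * ⟪a, v⟫_ℝ := by
      rw [hrep, sum_inner]
      exact Finset.sum_congr rfl fun a _ => real_inner_smul_left _ _ _
    have e4 : -∑ a ∈ S, ν a * ⟪a, v⟫_ℝ ≤ ∑ a ∈ S, ν a * β a := by
      rw [← Finset.sum_neg_distrib]
      refine Finset.sum_le_sum (fun a ha => ?_)
      have hb := hv a (hSB ha)
      have := hν0 a ha
      nlinarith
    have e5 : ∑ a ∈ S, ν a * β a ≤ Bmax * ∑ a ∈ S, |ν a| := by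
      rw [Finset.mul_sum]
      refine Finset.sum_le_sum (fun a ha => ?_)
      have h1 := hν0 a ha
      have h2 := hBmaxb a (hSB ha)
      have h3 := hβ a
      rw [abs_of_nonneg h1]
      nlinarith
    have e6 : ∑ a ∈ S, |ν a| ≤ cS S * ‖v - w‖ := by
      have := hcSspec ν
      rw [← hrep, norm_sub_rev] at this
      exact this
    have e7 : Bmax * (cS S * ‖v - w‖) ≤ Bmax * (C0 * ‖v - w‖) := by
      have : cS S * ‖v - w‖ ≤ C0 * ‖v - w‖ :=
        mul_le_mul_of_nonneg_right hcSC0 (norm_nonneg _)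
      exact mul_le_mul_of_nonneg_left this hBmax0
    calc ‖v - w‖ * ‖v - w‖ = -⟪w - v, v⟫_ℝ := by rw [e1, e2]
      _ = -∑ a ∈ S, ν a * ⟪a, v⟫_ℝ := by rw [e3]
      _ ≤ ∑ a ∈ S, ν a * β a := e4
      _ ≤ Bmax * ∑ a ∈ S, |ν a| := e5
      _ ≤ Bmax * (cS S * ‖v - w‖) :=
          mul_le_mul_of_nonneg_left e6 hBmax0
      _ ≤ Bmax * (C0 * ‖v - w‖) := e7
      _ = Bmax * C0 * ‖v - w‖ := by ring
  have hdistw : Metric.infDist v Pset ≤ ‖v - w‖ := by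
    rw [← dist_eq_norm]
    exact Metric.infDist_le_dist_of_mem hwP
  rcases eq_or_lt_of_le (norm_nonneg (v - w)) with h0 | hpos
  · rw [← h0] at hdistw
    exact le_trans hdistw (mul_nonneg hBmax0 hC00)
  · exact le_trans hdistw (le_of_mul_le_mul_right hkey hpos)


end Hoffman

/-- **Displacement bound from the proof of Property A3 of Theorem 1.** With
`P = {w : ⟪w, y₁ − z⟫ ≤ 0 for all z ∈ Y}` (a nonempty polyhedral cone), there is
a constant `C ≥ 0` such that for every `λ > 0`, every point `w` satisfying
`⟪w, y₁ − z⟫ ≤ λ |f(z) − f(y₁)|` for all `z ∈ Y` is at distance at most `C λ`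
from `P`. -/
theorem displacement_bound {N : ℕ} (hN : 0 < N)
    (Y : Finset (EuclideanSpace ℝ (Fin N))) (hY : Y.Nonempty)
    (f : EuclideanSpace ℝ (Fin N) →ᵃ[ℝ] ℝ)
    (y₁ : EuclideanSpace ℝ (Fin N)) (hy₁Y : y₁ ∈ Y)
    (P : Set (EuclideanSpace ℝ (Fin N)))
    (hP : P = {w | ∀ z ∈ Y, ⟪w, y₁ - z⟫_ℝ ≤ 0}) :
    ∃ C : ℝ, 0 ≤ C ∧ ∀ lam : ℝ, 0 < lam →
      ∀ w : EuclideanSpace ℝ (Fin N),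
        (∀ z ∈ Y, ⟪w, y₁ - z⟫_ℝ ≤ lam * |f z - f y₁|) →
        Metric.infDist w P ≤ C * lam := by
  classical
  set B : Finset (EuclideanSpace ℝ (Fin N)) := Y.image (fun z => z - y₁) with hB
  set β : EuclideanSpace ℝ (Fin N) → ℝ := fun x => |f.linear x| with hβdef
  have hβ : ∀ a, 0 ≤ β a := fun a => abs_nonneg _
  obtain ⟨C, hC0, hC⟩ := hoffman_cone B β hβ
  -- the feasible cone in the `B` description is exactly `P`
  have hPeq : {w : EuclideanSpace ℝ (Fin N) | ∀ a ∈ B, 0 ≤ ⟪a, w⟫_ℝ} = P := by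
    rw [hP]
    ext w
    simp only [Set.mem_setOf_eq, hB, Finset.mem_image]
    constructor
    · intro h z hz
      have := h (z - y₁) ⟨z, hz, rfl⟩
      have hinner : ⟪w, y₁ - z⟫_ℝ = -⟪z - y₁, w⟫_ℝ := by
        rw [real_inner_comm, ← neg_sub z y₁, inner_neg_left]
      rw [hinner]
      linarith
    · rintro h a ⟨z, hz, rfl⟩
      have := h z hz
      have hinner : ⟪w, y₁ - z⟫_ℝ = -⟪z - y₁, w⟫_ℝ := by
        rw [real_inner_comm, ← neg_sub z y₁, inner_neg_left]
      rw [hinner] at this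
      linarith
  refine ⟨C, hC0, fun lam hlam w hw => ?_⟩
  have hlam' : lam ≠ 0 := ne_of_gt hlam
  set v : EuclideanSpace ℝ (Fin N) := lam⁻¹ • w with hv
  -- the rescaled point satisfies the `β`-relaxed constraints
  have hvcon : ∀ a ∈ B, -β a ≤ ⟪a, v⟫_ℝ := by
    rintro a ha
    rw [hB, Finset.mem_image] at ha
    obtain ⟨z, hz, rfl⟩ := ha
    have h1 := hw z hz
    have hfz : |f z - f y₁| = β (z - y₁) := by
      rw [hβdef]
      congr 1
      have := f.linearMap_vsub z y₁
      simp only [vsub_eq_sub] at this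
      rw [this]
    have h2 : ⟪w, y₁ - z⟫_ℝ = -⟪z - y₁, w⟫_ℝ := by
      rw [real_inner_comm, ← neg_sub z y₁, inner_neg_left]
    rw [h2, hfz] at h1
    have h3 : -(lam * β (z - y₁)) ≤ ⟪z - y₁, w⟫_ℝ := by linarith
    have h4 : ⟪z - y₁, v⟫_ℝ = lam⁻¹ * ⟪z - y₁, w⟫_ℝ := by
      rw [hv, real_inner_smul_right]
    rw [h4]
    have h5 : lam⁻¹ * -(lam * β (z - y₁)) ≤ lam⁻¹ * ⟪z - y₁, w⟫_ℝ :=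
      mul_le_mul_of_nonneg_left h3 (by positivity)
    have h6 : lam⁻¹ * -(lam * β (z - y₁)) = -β (z - y₁) := by field_simp
    linarith
  have hfin := hC v hvcon
  rw [hPeq] at hfin
  have hPsmul : lam • P = P := by
    rw [hP]
    ext u
    rw [Set.mem_smul_set_iff_inv_smul_mem₀ hlam']
    simp only [Set.mem_setOf_eq]
    constructor
    · intro h z hz
      have h1 := h z hz
      rw [real_inner_smul_left] at h1
      have h2 : (0:ℝ) < lam⁻¹ := inv_pos.mpr hlam
      nlinarith
    · intro h z hz
      rw [real_inner_smul_left]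
      exact mul_nonpos_iff.mpr (Or.inl ⟨(inv_pos.mpr hlam).le, h z hz⟩)
  have hwv : w = lam • v := by rw [hv, smul_smul, mul_inv_cancel₀ hlam', one_smul]
  calc Metric.infDist w P = Metric.infDist (lam • v) (lam • P) := by rw [← hwv, hPsmul]
    _ = ‖lam‖ * Metric.infDist v P := infDist_smul₀ hlam' P v
    _ = lam * Metric.infDist v P := by rw [Real.norm_eq_abs, abs_of_pos hlam]
    _ ≤ lam * C := mul_le_mul_of_nonneg_left hfin hlam.le
    _ = C * lam := mul_comm _ _
end

section
/- Let λ > 0, let y₀, y₁ ∈ Y, and let S(y₀, y₁) = {w ∈ ℝ^N : y₀ is a solver output at w and y₁ is a λ-perturbed output at w}. Then at every point w in the topological interior of S(y₀, y₁), the interpolation f_λ has gradient −(1/λ)·(y₀ − y₁), i.e. f_λ is Fréchet differentiable at w with derivative the linear map v ↦ −(1/λ)·⟪v, y₀ − y₁⟫. (The gradient formula ∇f_λ(w) = −(1/λ)·(y(w) − y_λ(w)) used in the backward pass of Algorithm 1.) -/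
open scoped InnerProductSpace

/-- **Gradient formula for the backward pass.** On the interior of the region
`S(y₀, y₁)` where the solver output is `y₀` and the `λ`-perturbed output is
`y₁`, the interpolation `f_λ` is Fréchet differentiable with derivative
`v ↦ −(1/λ)⟪v, y₀ − y₁⟫`, i.e. gradient `−(1/λ)(y₀ − y₁)`. -/
theorem flam_gradient {N : ℕ} (hN : 0 < N)
    (Y : Finset (EuclideanSpace ℝ (Fin N))) (hY : Y.Nonempty)
    (f : EuclideanSpace ℝ (Fin N) →ᵃ[ℝ] ℝ)
    (lam : ℝ) (hlam : 0 < lam)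
    (y₀ y₁ : EuclideanSpace ℝ (Fin N)) (hy₀Y : y₀ ∈ Y) (hy₁Y : y₁ ∈ Y)
    (S : Set (EuclideanSpace ℝ (Fin N)))
    (hS : S = {w | (∀ y ∈ Y, ⟪w, y₀⟫_ℝ ≤ ⟪w, y⟫_ℝ) ∧
      (∀ y ∈ Y, ⟪w, y₁⟫_ℝ + lam * f y₁ ≤ ⟪w, y⟫_ℝ + lam * f y)})
    (flam : EuclideanSpace ℝ (Fin N) → ℝ)
    (hflam : ∀ w, flam w = (1 / lam) *
      (Y.inf' hY (fun y => ⟪w, y⟫_ℝ + lam * f y) - Y.inf' hY (fun y => ⟪w, y⟫_ℝ))) :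
    ∀ w ∈ interior S,
      HasFDerivAt flam ((-(1 / lam)) • (innerSL ℝ (y₀ - y₁))) w := by
  intro w hw
  set L := (-(1 / lam)) • (innerSL ℝ (y₀ - y₁)) with hL
  set g : EuclideanSpace ℝ (Fin N) → ℝ :=
    fun w => (1 / lam) * (⟪w, y₁⟫_ℝ + lam * f y₁ - ⟪w, y₀⟫_ℝ) with hg
  have hgS : ∀ v ∈ S, flam v = g v := by
    intro v hv
    rw [hS] at hv
    obtain ⟨h0, h1⟩ := hv
    have e0 : Y.inf' hY (fun y => ⟪v, y⟫_ℝ) = ⟪v, y₀⟫_ℝ :=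
      le_antisymm (Finset.inf'_le _ hy₀Y) (Finset.le_inf' _ _ (h0))
    have e1 : Y.inf' hY (fun y => ⟪v, y⟫_ℝ + lam * f y) = ⟪v, y₁⟫_ℝ + lam * f y₁ :=
      le_antisymm (Finset.inf'_le _ hy₁Y) (Finset.le_inf' _ _ (h1))
    rw [hflam, e0, e1]
  have hgD : HasFDerivAt g L w := by
    have heq : g = fun v => L v + (f y₁) := by
      funext v
      have hLv : L v = (1 / lam) * (⟪v, y₁⟫_ℝ - ⟪v, y₀⟫_ℝ) := by
        rw [hL]
        rw [ContinuousLinearMap.smul_apply, innerSL_apply_apply, inner_sub_left,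
          real_inner_comm y₀ v, real_inner_comm y₁ v]
        simp only [smul_eq_mul]
        ring
      rw [hg]
      simp only []
      rw [hLv]
      field_simp
      ring
    rw [heq]
    exact (L.hasFDerivAt).add_const (f y₁)
  refine hgD.congr_of_eventuallyEq ?_
  filter_upwards [isOpen_interior.mem_nhds hw] with v hv
  exact hgS v (interior_subset hv)
end

section
/- For Lebesgue-almost every w ∈ ℝ^N there exists λ₀ > 0 such that for every λ with 0 < λ ≤ λ₀ and every solver output y₀ at w, it holds that f_λ(w) = f(y₀). (Vanishing part of Property A2 of Theorem 1: the sets W_err^λ on which f_λ deviates from f∘y shrink to a null set as λ → 0⁺.) -/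
open scoped InnerProductSpace
open MeasureTheory

lemma hyperplane_null {N : ℕ} (v : EuclideanSpace ℝ (Fin N)) (hv : v ≠ 0) :
    volume {w : EuclideanSpace ℝ (Fin N) | ⟪v, w⟫_ℝ = 0} = 0 := by
  have hker : LinearMap.ker ((innerSL ℝ v : EuclideanSpace ℝ (Fin N) →L[ℝ] ℝ) :
      EuclideanSpace ℝ (Fin N) →ₗ[ℝ] ℝ) ≠ ⊤ := by
    intro h
    have hv2 : ⟪v, v⟫_ℝ = 0 := by
      have := h ▸ (Submodule.mem_top (R := ℝ) (x := v))
      simpa using this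
    exact hv (inner_self_eq_zero.mp hv2)
  have := Measure.addHaar_submodule (volume : Measure (EuclideanSpace ℝ (Fin N))) _ hker
  convert this using 1
  congr 1

/-- **Vanishing part of Property A2 of Theorem 1.** For Lebesgue-almost every
`w ∈ ℝ^N` there exists `λ₀ > 0` such that for all `0 < λ ≤ λ₀` and every solver
output `y₀` at `w`, the interpolation satisfies `f_λ(w) = f(y₀)`. -/
theorem flam_eventually_exact {N : ℕ} (hN : 0 < N)
    (Y : Finset (EuclideanSpace ℝ (Fin N))) (hY : Y.Nonempty)
    (f : EuclideanSpace ℝ (Fin N) →ᵃ[ℝ] ℝ) :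
    ∀ᵐ w : EuclideanSpace ℝ (Fin N) ∂volume,
      ∃ lam₀ : ℝ, 0 < lam₀ ∧ ∀ lam : ℝ, 0 < lam → lam ≤ lam₀ →
        ∀ y₀ ∈ Y, (∀ y ∈ Y, ⟪w, y₀⟫_ℝ ≤ ⟪w, y⟫_ℝ) →
          (1 / lam) * (Y.inf' hY (fun y => ⟪w, y⟫_ℝ + lam * f y) -
            Y.inf' hY (fun y => ⟪w, y⟫_ℝ)) = f y₀ := by
  classical
  set S : Set (EuclideanSpace ℝ (Fin N)) :=
    ⋃ y ∈ (Y : Set (EuclideanSpace ℝ (Fin N))), ⋃ y' ∈ (Y : Set (EuclideanSpace ℝ (Fin N))), ⋃ (_ : y ≠ y'),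
      {w | ⟪y - y', w⟫_ℝ = 0} with hSdef
  have hS : volume S = 0 := by
    refine measure_biUnion_null_iff Y.countable_toSet |>.mpr fun y hy => ?_
    refine measure_biUnion_null_iff Y.countable_toSet |>.mpr fun y' hy' => ?_
    refine measure_iUnion_null fun hne => ?_
    exact hyperplane_null _ (sub_ne_zero.mpr hne)
  rw [ae_iff]
  refine measure_mono_null (fun w hw => ?_) hS
  by_contra hwS
  refine hw ?_
  -- injectivity of y ↦ ⟪w, y⟫ on Y
  have hinj : ∀ y ∈ Y, ∀ y' ∈ Y, ⟪w, y⟫_ℝ = ⟪w, y'⟫_ℝ → y = y' := by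
    intro y hy y' hy' he
    by_contra hne
    refine hwS ?_
    simp only [hSdef, Set.mem_iUnion]
    refine ⟨y, hy, y', hy', hne, ?_⟩
    simp only [Set.mem_setOf_eq, inner_sub_left]
    rw [real_inner_comm y w, real_inner_comm y' w] at *
    linarith
  -- strict minimizer
  obtain ⟨ys, hys, hysmin⟩ := Y.exists_min_image (fun y => ⟪w, y⟫_ℝ) hY
  obtain ⟨lam₀, hlam₀, hkey⟩ : ∃ lam₀ : ℝ, 0 < lam₀ ∧ ∀ lam : ℝ, 0 < lam → lam ≤ lam₀ →
      ∀ y ∈ Y, ⟪w, ys⟫_ℝ + lam * f ys ≤ ⟪w, y⟫_ℝ + lam * f y := by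
    by_cases hE : (Y.erase ys).Nonempty
    · set g : ℝ := (Y.erase ys).inf' hE (fun y => ⟪w, y⟫_ℝ - ⟪w, ys⟫_ℝ) with hg
      have hgpos : 0 < g := by
        rw [hg]
        refine (Finset.lt_inf'_iff hE).mpr fun y hy => ?_
        have hyY := Finset.mem_of_mem_erase hy
        have hne := Finset.ne_of_mem_erase hy
        have hle := hysmin y hyY
        rcases lt_or_eq_of_le hle with h | h
        · linarith
        · exact absurd (hinj _ hys _ hyY h) (Ne.symm hne)
      set M : ℝ := Y.sup' hY (fun y => |f y|) with hM
      have hMys : |f ys| ≤ M := by rw [hM]; exact Finset.le_sup' (fun y => |f y|) hys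
      have hM0 : 0 ≤ M := le_trans (abs_nonneg _) hMys
      refine ⟨g / (2 * M + 1), by positivity, fun lam hl hll y hy => ?_⟩
      rcases eq_or_ne y ys with rfl | hne
      · exact le_refl _
      · have hyE : y ∈ Y.erase ys := Finset.mem_erase.mpr ⟨hne, hy⟩
        have hgy : g ≤ ⟪w, y⟫_ℝ - ⟪w, ys⟫_ℝ := Finset.inf'_le _ hyE
        have h1 : lam * (2 * M + 1) ≤ g := (le_div_iff₀ (by positivity)).mp hll
        have hb1 : f ys ≤ M := le_trans (le_abs_self _) hMys
        have hb2 : -f y ≤ M := le_trans (neg_le_abs _) (by rw [hM]; exact Finset.le_sup' (fun y => |f y|) hy)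
        have h2 : lam * (f ys - f y) ≤ lam * (2 * M) :=
          mul_le_mul_of_nonneg_left (by linarith) hl.le
        nlinarith
    · refine ⟨1, one_pos, fun lam hl hll y hy => ?_⟩
      rcases eq_or_ne y ys with rfl | hne
      · exact le_refl _
      · exact absurd (Finset.mem_erase.mpr ⟨Ne.symm (Ne.symm hne), hy⟩) (by simp [Finset.not_nonempty_iff_eq_empty.mp hE])
  refine ⟨lam₀, hlam₀, fun lam hl hll y₀ hy₀ hy₀min => ?_⟩
  have hy0 : y₀ = ys := hinj _ hy₀ _ hys (le_antisymm (hy₀min _ hys) (hysmin _ hy₀))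
  have h1 : Y.inf' hY (fun y => ⟪w, y⟫_ℝ) = ⟪w, ys⟫_ℝ :=
    le_antisymm (Finset.inf'_le _ hys) (Finset.le_inf' hY _ hysmin)
  have h2 : Y.inf' hY (fun y => ⟪w, y⟫_ℝ + lam * f y) = ⟪w, ys⟫_ℝ + lam * f ys :=
    le_antisymm (Finset.inf'_le _ hys) (Finset.le_inf' hY _ (hkey lam hl hll))
  rw [h1, h2, hy0]
  field_simp
  ring
end
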